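/- Let k be a field of characteristic 0 with algebraic closure L, and let I ⊆ k[x_1,…,x_n] be a zero-dimensional ideal. For t ∈ k[x_1,…,x_n], let χ_t ∈ k[T] be the characteristic polynomial of the multiplication map m_t and let χ̄_t = χ_t / gcd(χ_t, χ_t′) be its squarefree part. Then t separates V_L(I) if and only if deg(χ̄_t) equals the number of points of V_L(I). -/

import Mathlib

open Polynomial
set_option maxHeartbeats 1000000
set_option synthInstance.maxHeartbeats 400000


lemma matrix_charpoly_eval {m R : Type*} [Fintype m] [DecidableEq m] [CommRing R]
    (M : Matrix m m R) (μ : R) :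
    M.charpoly.eval μ = (Matrix.diagonal (fun _ => μ) - M).det := by
  rw [Matrix.charpoly, ← coe_evalRingHom, RingHom.map_det]
  congr 1
  ext i j
  rcases eq_or_ne i j with rfl | h
  · simp [Matrix.charmatrix_apply_eq, Matrix.diagonal_apply_eq]
  · simp [Matrix.charmatrix_apply_ne _ _ _ h, Matrix.diagonal_apply_ne _ h]

lemma charpoly_eval_eq_det {K V : Type*} [Field K] [AddCommGroup V] [Module K V]
    [FiniteDimensional K V] (f : V →ₗ[K] V) (μ : K) :
    f.charpoly.eval μ = LinearMap.det (μ • LinearMap.id - f) := by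
  classical
  let b := Module.finBasis K V
  rw [← LinearMap.charpoly_toMatrix f b, matrix_charpoly_eval,
    ← LinearMap.det_toMatrix b, map_sub, map_smul, LinearMap.toMatrix_id]
  congr 1
  ext i j
  rcases eq_or_ne i j with rfl | h
  · simp [Matrix.diagonal_apply_eq, Matrix.one_apply]
  · simp [Matrix.diagonal_apply_ne _ h, Matrix.one_apply_ne h]

lemma not_isUnit_of_charpoly_root {K A : Type*} [Field K] [CommRing A] [Algebra K A]
    [FiniteDimensional K A] {b : A} {μ : K}
    (h : (LinearMap.mulLeft K b).charpoly.IsRoot μ) :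
    ¬ IsUnit (algebraMap K A μ - b) := by
  rw [IsRoot, charpoly_eval_eq_det] at h
  obtain ⟨v, hv, hv0⟩ :=
    Submodule.exists_mem_ne_zero_of_ne_bot (LinearMap.bot_lt_ker_of_det_eq_zero h).ne'
  intro hu
  rw [LinearMap.mem_ker, LinearMap.sub_apply, LinearMap.smul_apply, LinearMap.id_apply,
    LinearMap.mulLeft_apply] at hv
  have hvz : (algebraMap K A μ - b) * v = 0 := by
    rw [sub_mul, ← Algebra.smul_def]; exact hv
  exact hv0 ((hu.mul_right_eq_zero).mp hvz)

lemma exists_algHom_of_not_isUnit {K A : Type*} [Field K] [IsAlgClosed K] [CommRing A]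
    [Algebra K A] [FiniteDimensional K A] {a : A} (ha : ¬ IsUnit a) :
    ∃ φ : A →ₐ[K] K, φ a = 0 := by
  obtain ⟨m, hm, ham⟩ := exists_max_ideal_of_mem_nonunits ha
  letI := hm
  letI : Field (A ⧸ m) := Ideal.Quotient.field m
  have hfin : Module.Finite K (A ⧸ m) :=
    Module.Finite.of_surjective (Ideal.Quotient.mkₐ K m).toLinearMap Ideal.Quotient.mk_surjective
  have : Algebra.IsIntegral K (A ⧸ m) := Algebra.IsIntegral.of_finite K _
  have hsurj : Function.Surjective (algebraMap K (A ⧸ m)) :=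
    IsAlgClosed.algebraMap_bijective_of_isIntegral.2
  have hbij : Function.Bijective (Algebra.ofId K (A ⧸ m)) :=
    ⟨(algebraMap K (A ⧸ m)).injective, hsurj⟩
  let e := AlgEquiv.ofBijective _ hbij
  refine ⟨e.symm.toAlgHom.comp (Ideal.Quotient.mkₐ K m), ?_⟩
  have h0 : (Ideal.Quotient.mkₐ K m) a = 0 := (Ideal.Quotient.eq_zero_iff_mem).mpr ham
  simp [Ideal.Quotient.eq_zero_iff_mem, ham]

lemma aeval_charpoly_root {k L : Type} [Field k] [Field L] [Algebra k L]
    (n : ℕ) (I : Ideal (MvPolynomial (Fin n) k))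
    [FiniteDimensional k (MvPolynomial (Fin n) k ⧸ I)]
    (s : MvPolynomial (Fin n) k) (p : Fin n → L)
    (hp : ∀ f ∈ I, MvPolynomial.aeval p f = 0) :
    ((LinearMap.mulLeft k ((Ideal.Quotient.mk I) s)).charpoly.map (algebraMap k L)).IsRoot
      (MvPolynomial.aeval p s) := by
  set A := MvPolynomial (Fin n) k ⧸ I
  set sa := Ideal.Quotient.mk I s with hsa
  set χ := (LinearMap.mulLeft k sa).charpoly with hχ
  have hlm : ∀ a : A, Algebra.lmul k A a = LinearMap.mulLeft k a := fun a => by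
    ext x; simp [LinearMap.mulLeft_apply]
  have hCH : (Polynomial.aeval sa) χ = 0 := by
    have h1 := Polynomial.aeval_algHom_apply (Algebra.lmul k A) sa χ
    rw [hlm sa, LinearMap.aeval_self_charpoly, hlm ((Polynomial.aeval sa) χ)] at h1
    have h2 := congrArg (fun g : Module.End k A => g 1) h1
    simp only [LinearMap.zero_apply, LinearMap.mulLeft_apply, mul_one] at h2
    exact h2.symm
  let φ : A →ₐ[k] L := Ideal.Quotient.liftₐ I (MvPolynomial.aeval p) hp
  have hφ : φ sa = MvPolynomial.aeval p s := by
    show Ideal.Quotient.liftₐ I (MvPolynomial.aeval p) hp ((Ideal.Quotient.mk I) s)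
      = MvPolynomial.aeval p s
    rw [Ideal.Quotient.liftₐ_apply]
    rfl
  have h2 := Polynomial.aeval_algHom_apply φ sa χ
  rw [hCH, map_zero] at h2
  rw [IsRoot, eval_map, ← hφ, ← Polynomial.aeval_def]
  exact h2

lemma exists_point_of_root {k L : Type} [Field k] [Field L] [Algebra k L] [IsAlgClosed L]
    (n : ℕ) (I : Ideal (MvPolynomial (Fin n) k))
    [FiniteDimensional k (MvPolynomial (Fin n) k ⧸ I)]
    (s : MvPolynomial (Fin n) k) {μ : L}
    (hμ : ((LinearMap.mulLeft k ((Ideal.Quotient.mk I) s)).charpoly.map (algebraMap k L)).IsRoot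
      μ) :
    ∃ p : Fin n → L, (∀ f ∈ I, MvPolynomial.aeval p f = 0) ∧ MvPolynomial.aeval p s = μ := by
  have hbc : ((LinearMap.mulLeft k (Ideal.Quotient.mk I s)).baseChange L).charpoly
      = (LinearMap.mulLeft k (Ideal.Quotient.mk I s)).charpoly.map (algebraMap k L) :=
    LinearMap.charpoly_baseChange (LinearMap.mulLeft k (Ideal.Quotient.mk I s)) L
  have hmul : (LinearMap.mulLeft k (Ideal.Quotient.mk I s)).baseChange L
      = LinearMap.mulLeft L ((1 : L) ⊗ₜ[k] (Ideal.Quotient.mk I s)) := by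
    apply LinearMap.restrictScalars_injective k
    apply TensorProduct.ext'
    intro x y
    simp [LinearMap.baseChange_tmul, LinearMap.mulLeft_apply,
      Algebra.TensorProduct.tmul_mul_tmul]
  have hroot : (LinearMap.mulLeft L ((1 : L) ⊗ₜ[k] (Ideal.Quotient.mk I s))).charpoly.IsRoot
      μ := by
    rw [← hmul, hbc]; exact hμ
  have hnu := @not_isUnit_of_charpoly_root L (TensorProduct k L (MvPolynomial (Fin n) k ⧸ I))
    _ _ _ _ ((1 : L) ⊗ₜ[k] (Ideal.Quotient.mk I s)) μ hroot
  obtain ⟨ψ, hψ⟩ := @exists_algHom_of_not_isUnit L (TensorProduct k L (MvPolynomial (Fin n) k ⧸ I))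
    _ _ _ _ _ _ hnu
  have hψb : ψ ((1 : L) ⊗ₜ[k] (Ideal.Quotient.mk I s)) = μ := by
    rw [map_sub] at hψ
    have hc : ψ (algebraMap L (TensorProduct k L (MvPolynomial (Fin n) k ⧸ I)) μ) = μ :=
      ψ.commutes μ
    rw [hc, sub_eq_zero] at hψ
    exact hψ.symm
  let φ : (MvPolynomial (Fin n) k ⧸ I) →ₐ[k] L :=
    (ψ.restrictScalars k).comp Algebra.TensorProduct.includeRight
  have hkey : (MvPolynomial.aeval (fun i => φ (Ideal.Quotient.mk I (MvPolynomial.X i))) :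
      MvPolynomial (Fin n) k →ₐ[k] L) = φ.comp (Ideal.Quotient.mkₐ k I) := by
    apply MvPolynomial.algHom_ext
    intro i
    simp
  refine ⟨fun i => φ (Ideal.Quotient.mk I (MvPolynomial.X i)), ?_, ?_⟩
  · intro f hf
    have h3 := congrArg (fun g : MvPolynomial (Fin n) k →ₐ[k] L => g f) hkey
    simp only [AlgHom.comp_apply] at h3
    rw [h3]
    have h0 : (Ideal.Quotient.mkₐ k I) f = 0 := (Ideal.Quotient.eq_zero_iff_mem).mpr hf
    rw [h0, map_zero]
  · have h3 := congrArg (fun g : MvPolynomial (Fin n) k →ₐ[k] L => g s) hkey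
    simp only [AlgHom.comp_apply] at h3
    rw [h3]
    have h4 : (Ideal.Quotient.mkₐ k I) s = Ideal.Quotient.mk I s := rfl
    rw [h4]
    show ψ (Algebra.TensorProduct.includeRight (Ideal.Quotient.mk I s)) = μ
    rw [Algebra.TensorProduct.includeRight_apply]
    exact hψb

lemma natDegree_squarefree_part {k L : Type} [Field k] [CharZero k] [Field L] [Algebra k L]
    [IsAlgClosed L] [DecidableEq (Polynomial k)] [DecidableEq L] {χ : Polynomial k}
    (hχ : χ.Monic) :
    (χ / EuclideanDomain.gcd χ (derivative χ)).natDegree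
      = ((χ.map (algebraMap k L)).roots.toFinset).card := by
  have hCZL : CharZero L := charZero_of_injective_algebraMap (algebraMap k L).injective
  have hχ0 : χ ≠ 0 := hχ.ne_zero
  set g := EuclideanDomain.gcd χ (derivative χ) with hgdef
  have hgdvd : g ∣ χ := EuclideanDomain.gcd_dvd_left χ (derivative χ)
  have hgdvd' : g ∣ derivative χ := EuclideanDomain.gcd_dvd_right χ (derivative χ)
  have hg0 : g ≠ 0 := by
    intro h
    exact hχ0 (EuclideanDomain.gcd_eq_zero_iff.mp h).1
  obtain ⟨q, hq⟩ := id hgdvd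
  have hqdiv : χ / g = q := by rw [hq, mul_div_cancel_left₀ _ hg0]
  have hq0 : q ≠ 0 := by rintro rfl; rw [mul_zero] at hq; exact hχ0 hq
  have hdeg : χ.natDegree = g.natDegree + q.natDegree := by
    rw [hq, natDegree_mul hg0 hq0]
  -- move to L
  set F := algebraMap k L with hF
  set χL := χ.map F with hχL
  set gL := g.map F with hgL
  have hχL0 : χL ≠ 0 := Polynomial.map_ne_zero hχ0
  have hgL0 : gL ≠ 0 := Polynomial.map_ne_zero hg0
  have hgLdvd : gL ∣ χL := Polynomial.map_dvd _ hgdvd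
  have hgLdvd' : gL ∣ derivative χL := by
    rw [hχL, derivative_map]
    exact Polynomial.map_dvd _ hgdvd'
  -- any common power divisor divides gL via Bezout
  have hbez : ∀ (h : Polynomial L), h ∣ χL → h ∣ derivative χL → h ∣ gL := by
    intro h h1 h2
    have hb := EuclideanDomain.gcd_eq_gcd_ab χ (derivative χ)
    rw [← hgdef] at hb
    have : gL = χL * ((EuclideanDomain.gcdA χ (derivative χ)).map F)
        + (derivative χL) * ((EuclideanDomain.gcdB χ (derivative χ)).map F) := by
      rw [hgL, hb, Polynomial.map_add, Polynomial.map_mul, Polynomial.map_mul, hχL,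
        derivative_map]
    rw [this]
    exact dvd_add (h1.mul_right _) (h2.mul_right _)
  -- degrees over L
  have hdegχ : χ.natDegree = χL.natDegree := (natDegree_map F).symm
  have hdegg : g.natDegree = gL.natDegree := (natDegree_map F).symm
  have hsplitχ : χL.Splits := IsAlgClosed.splits χL
  have hsplitg : gL.Splits := IsAlgClosed.splits gL
  have hcardχ : Multiset.card χL.roots = χL.natDegree := splits_iff_card_roots.mp hsplitχ
  have hcardg : Multiset.card gL.roots = gL.natDegree := splits_iff_card_roots.mp hsplitg
  -- multiplicities
  have hmult : ∀ r ∈ χL.roots.toFinset, rootMultiplicity r gL = rootMultiplicity r χL - 1 := by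
    intro r hr
    have hroot : χL.IsRoot r := isRoot_of_mem_roots (Multiset.mem_toFinset.mp hr)
    have hm1 : 1 ≤ rootMultiplicity r χL := (rootMultiplicity_pos hχL0).mpr hroot
    have hd0 : derivative χL ≠ 0 := by
      intro h
      have h1 : χL.natDegree = 0 := natDegree_eq_zero_of_derivative_eq_zero h
      have h2 : (1 : ℕ) ≤ Multiset.card χL.roots :=
        Multiset.card_pos.mpr (by
          intro h'; rw [h'] at hr; simp at hr)
      omega
    have hd' : rootMultiplicity r (derivative χL) = rootMultiplicity r χL - 1 :=
      derivative_rootMultiplicity_of_root hroot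
    have hub : rootMultiplicity r gL ≤ rootMultiplicity r χL - 1 := by
      rw [← hd']
      exact (le_rootMultiplicity_iff hd0).mpr
        ((pow_rootMultiplicity_dvd gL r).trans hgLdvd')
    have hlb : rootMultiplicity r χL - 1 ≤ rootMultiplicity r gL := by
      apply (le_rootMultiplicity_iff hgL0).mpr
      apply hbez
      · exact (pow_dvd_pow _ (Nat.sub_le _ _)).trans (pow_rootMultiplicity_dvd χL r)
      · rw [← hd']
        exact pow_rootMultiplicity_dvd _ r
    omega
  -- sums
  have hsubset : gL.roots.toFinset ⊆ χL.roots.toFinset := by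
    intro x hx
    rw [Multiset.mem_toFinset] at hx ⊢
    exact Multiset.mem_of_le (roots.le_of_dvd hχL0 hgLdvd) hx
  have hsum1 : ∑ r ∈ χL.roots.toFinset, χL.roots.count r = Multiset.card χL.roots :=
    Multiset.toFinset_sum_count_eq _
  have hsum2 : ∑ r ∈ χL.roots.toFinset, gL.roots.count r = Multiset.card gL.roots := by
    rw [← Multiset.toFinset_sum_count_eq gL.roots]
    exact (Finset.sum_subset hsubset (fun x _ hx =>
      Multiset.count_eq_zero.mpr (fun hmem => hx (Multiset.mem_toFinset.mpr hmem)))).symm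
  have hkey : ∑ r ∈ χL.roots.toFinset, χL.roots.count r
      = (∑ r ∈ χL.roots.toFinset, gL.roots.count r) + χL.roots.toFinset.card := by
    rw [Finset.card_eq_sum_ones, ← Finset.sum_add_distrib]
    apply Finset.sum_congr rfl
    intro r hr
    have h1 := hmult r hr
    have hroot : χL.IsRoot r := isRoot_of_mem_roots (Multiset.mem_toFinset.mp hr)
    have hm1 : 1 ≤ rootMultiplicity r χL := (rootMultiplicity_pos hχL0).mpr hroot
    rw [count_roots, count_roots, h1]
    omega
  rw [hqdiv]
  rw [hsum1, hsum2] at hkey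
  omega

/-- `t` separates `V_L(I)` iff the degree of the squarefree part
`χ̄_t = χ_t / gcd(χ_t, χ_t′)` of the characteristic polynomial of `m_t` equals the number
of points of `V_L(I)`. -/
theorem stmt_4 (k L : Type) [Field k] [CharZero k] [Field L] [Algebra k L]
    [IsAlgClosure k L] [DecidableEq (Polynomial k)] (n : ℕ) (I : Ideal (MvPolynomial (Fin n) k))
    [FiniteDimensional k (MvPolynomial (Fin n) k ⧸ I)]
    (t : MvPolynomial (Fin n) k)
    (χ : Polynomial k)
    (hχ : χ = LinearMap.charpoly (LinearMap.mulLeft k ((Ideal.Quotient.mk I) t))) :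
    Set.InjOn (fun p : Fin n → L => MvPolynomial.aeval p t)
        {p : Fin n → L | ∀ f ∈ I, MvPolynomial.aeval p f = 0}
      ↔ (χ / EuclideanDomain.gcd χ (Polynomial.derivative χ)).natDegree
          = Nat.card {p : Fin n → L | ∀ f ∈ I, MvPolynomial.aeval p f = 0} := by
  haveI : CharZero L := charZero_of_injective_algebraMap (algebraMap k L).injective
  haveI : IsAlgClosed L := IsAlgClosure.isAlgClosed k
  haveI : DecidableEq L := Classical.decEq L
  have hmono : χ.Monic := by rw [hχ]; exact LinearMap.charpoly_monic _
  have hχL0 : χ.map (algebraMap k L) ≠ 0 := Polynomial.map_ne_zero hmono.ne_zero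
  set V := {p : Fin n → L | ∀ f ∈ I, MvPolynomial.aeval p f = 0} with hVdef
  set T := fun p : Fin n → L => MvPolynomial.aeval p t with hTdef
  have hW : T '' V = ↑(χ.map (algebraMap k L)).roots.toFinset := by
    ext μ
    simp only [Set.mem_image, Finset.coe_sort_coe, Finset.mem_coe, Multiset.mem_toFinset,
      mem_roots hχL0]
    constructor
    · rintro ⟨p, hp, rfl⟩
      rw [hχ]
      exact aeval_charpoly_root n I t p hp
    · intro hμ
      rw [hχ] at hμ
      obtain ⟨p, hp1, hp2⟩ := exists_point_of_root n I t hμ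
      exact ⟨p, hp1, hp2⟩
  have hVfin : V.Finite := by
    have hfin : ∀ i : Fin n, {x : L |
        ((LinearMap.mulLeft k ((Ideal.Quotient.mk I) (MvPolynomial.X i))).charpoly.map
          (algebraMap k L)).IsRoot x}.Finite := by
      intro i
      exact Polynomial.finite_setOf_isRoot
        (Polynomial.map_ne_zero (LinearMap.charpoly_monic _).ne_zero)
    apply Set.Finite.subset (Set.Finite.pi (fun i => hfin i))
    intro p hp
    simp only [Set.mem_pi, Set.mem_univ, forall_true_left]
    intro i
    have h1 := aeval_charpoly_root n I (MvPolynomial.X i) p hp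
    simpa using h1
  have hnd : (χ / EuclideanDomain.gcd χ (Polynomial.derivative χ)).natDegree
      = (T '' V).ncard := by
    rw [natDegree_squarefree_part (L := L) hmono, hW, Set.ncard_coe_finset]
  rw [Nat.card_coe_set_eq, hnd]
  constructor
  · intro h
    rw [Set.ncard_image_of_injOn h]
  · intro h
    apply hVfin.injOn_of_encard_image_eq
    rw [← (hVfin.image T).cast_ncard_eq, ← hVfin.cast_ncard_eq, h]
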